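/- arXiv:1909.04197 — 4 statements merged into one kernel-verified Lean document; each statement's English description precedes it below -/
import Mathlib

section
/- If a1, a2, b0, d3 are nonzero complex numbers with a1·a2 + b0·d3 = 0, then (|a2|² + |b0|²)·(|a2|² + |d3|²) > 0; consequently the two complex numbers a1²·a2² + a1·a2·b0·d3 and −a1·a2·b0²·conj(b0)·d3 + |a1|²·b0²·d3² + |a2|²·b0²·d3² − a1·a2·b0·d3²·conj(d3) cannot both be zero unless one of a1, a2, b0, d3 vanishes. -/
open Complex

/-- Key nonvanishing lemma for planar Case C4 with complex coefficients. -/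
theorem stmt_4 (a1 a2 b0 d3 : ℂ)
    (ha1 : a1 ≠ 0) (ha2 : a2 ≠ 0) (hb0 : b0 ≠ 0) (hd3 : d3 ≠ 0)
    (h : a1 * a2 + b0 * d3 = 0) :
    0 < ((‖a2‖) ^ 2 + (‖b0‖) ^ 2)
        * ((‖a2‖) ^ 2 + (‖d3‖) ^ 2)
    ∧ ¬ (a1 ^ 2 * a2 ^ 2 + a1 * a2 * b0 * d3 = 0
        ∧ -(a1 * a2 * b0 ^ 2 * (starRingEnd ℂ) b0 * d3)
            + (‖a1‖ : ℂ) ^ 2 * b0 ^ 2 * d3 ^ 2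
            + (‖a2‖ : ℂ) ^ 2 * b0 ^ 2 * d3 ^ 2
            - a1 * a2 * b0 * d3 ^ 2 * (starRingEnd ℂ) d3 = 0) := by
  have habs2 : 0 < ‖a2‖ := norm_pos_iff.mpr ha2
  have habs1 : 0 < ‖a1‖ := norm_pos_iff.mpr ha1
  have habsb : 0 < ‖b0‖ := norm_pos_iff.mpr hb0
  have habsd : 0 < ‖d3‖ := norm_pos_iff.mpr hd3
  refine ⟨by positivity, ?_⟩
  rintro ⟨h1, h2⟩
  have hA : ∀ z : ℂ, ((‖z‖ : ℂ)) ^ 2 = z * (starRingEnd ℂ) z := by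
    intro z
    rw [Complex.mul_conj]
    norm_cast
    exact Complex.sq_norm z
  have key : ((‖a1‖ : ℂ) ^ 2 + (‖a2‖ : ℂ) ^ 2
      + (‖b0‖ : ℂ) ^ 2 + (‖d3‖ : ℂ) ^ 2) * (b0 ^ 2 * d3 ^ 2) = 0 := by
    linear_combination h2 + (b0 ^ 2 * (starRingEnd ℂ) b0 * d3 +
      b0 * d3 ^ 2 * (starRingEnd ℂ) d3) * h +
      (b0 ^ 2 * d3 ^ 2) * (hA b0) + (b0 ^ 2 * d3 ^ 2) * (hA d3)
  have hbd : (b0 ^ 2 * d3 ^ 2) ≠ 0 := by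
    exact mul_ne_zero (pow_ne_zero _ hb0) (pow_ne_zero _ hd3)
  have hsum : ((‖a1‖ : ℂ) ^ 2 + (‖a2‖ : ℂ) ^ 2
      + (‖b0‖ : ℂ) ^ 2 + (‖d3‖ : ℂ) ^ 2) = 0 := by
    exact (mul_eq_zero.mp key).resolve_right hbd
  have hsumR : (‖a1‖) ^ 2 + (‖a2‖) ^ 2
      + (‖b0‖) ^ 2 + (‖d3‖) ^ 2 = 0 := by
    exact_mod_cast hsum
  nlinarith [habs1, habs2, habsb, habsd]
end

section
/- Let a1, a2, a3, b0 be nonzero complex numbers and a0 a real number, and define P_c(z1, z2, E) = −a3·E·z1²z2² − a1·E·z1²z2 − a2·E·z1z2² + (−|b0|² − a0·E + E²)·z1z2 − conj(a2)·E·z1 − conj(a1)·E·z2 − conj(a3)·E. Then P_c cannot be factored as (a11·z1z2 + a00)·(b11·z1z2 + b10·z1 + b01·z2 + b00) with complex coefficients for more than finitely many real values of E. -/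
open Complex Polynomial

/-- Case C5: the dispersion polynomial admits a factorization of the given shape
for at most finitely many real energies E. -/
theorem stmt_5 (a1 a2 a3 b0 : ℂ) (a0 : ℝ)
    (ha1 : a1 ≠ 0) (ha2 : a2 ≠ 0) (ha3 : a3 ≠ 0) (hb0 : b0 ≠ 0) :
    {E : ℝ | ∃ a11 a00 b11 b10 b01 b00 : ℂ, ∀ z1 z2 : ℂ,
        -a3 * (E : ℂ) * z1 ^ 2 * z2 ^ 2 - a1 * (E : ℂ) * z1 ^ 2 * z2
          - a2 * (E : ℂ) * z1 * z2 ^ 2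
          + (-(‖b0‖ : ℂ) ^ 2 - (a0 : ℂ) * (E : ℂ) + (E : ℂ) ^ 2) * z1 * z2
          - (starRingEnd ℂ) a2 * (E : ℂ) * z1
          - (starRingEnd ℂ) a1 * (E : ℂ) * z2
          - (starRingEnd ℂ) a3 * (E : ℂ)
        = (a11 * z1 * z2 + a00) * (b11 * z1 * z2 + b10 * z1 + b01 * z2 + b00)}.Finite := by
  set q : ℂ := (starRingEnd ℂ) a2 with hq
  set r3 : ℂ := (starRingEnd ℂ) a3 with hr3
  have hqne : q ≠ 0 := by simpa [hq] using ha2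
  have hr3ne : r3 ≠ 0 := by simpa [hr3] using ha3
  set B2 : ℂ := (‖b0‖ : ℂ) ^ 2 with hB2
  set p : ℂ[X] := C (a1 * q) * X ^ 2
      + C (a1 ^ 2 * r3 + a3 * q ^ 2 - (a0 : ℂ) * a1 * q) * X + C (-(a1 * q) * B2) with hp
  have hlead : a1 * q ≠ 0 := mul_ne_zero ha1 hqne
  have hpne : p ≠ 0 := by
    intro h
    apply hlead
    have h2 : p.coeff 2 = a1 * q := by
      rw [hp]
      simp only [coeff_add, coeff_C_mul, coeff_X_pow, coeff_C, coeff_X]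
      norm_num
    rw [h] at h2
    simpa using h2.symm
  have hfin : {x : ℂ | p.IsRoot x}.Finite := by
    have hset : {x : ℂ | p.IsRoot x} = ↑p.roots.toFinset := by
      ext x
      simp [Polynomial.mem_roots', hpne]
    rw [hset]
    exact p.roots.toFinset.finite_toSet
  have hpre : ((fun E : ℝ => (E : ℂ)) ⁻¹' {x : ℂ | p.IsRoot x}).Finite :=
    hfin.preimage (Complex.ofReal_injective.injOn)
  apply Set.Finite.subset (hpre.insert 0)
  intro E hE
  obtain ⟨a11, a00, b11, b10, b01, b00, h⟩ := hE
  by_cases hE0 : E = 0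
  · exact Set.mem_insert_iff.mpr (Or.inl hE0)
  refine Set.mem_insert_iff.mpr (Or.inr ?_)
  have hEc : (E : ℂ) ≠ 0 := Complex.ofReal_ne_zero.mpr hE0
  have h00 := h 0 0
  have h10 := h 1 0
  have h01 := h 0 1
  have h11 := h 1 1
  have h21 := h 2 1
  have h12 := h 1 2
  have h22 := h 2 2
  have c00 : a00 * b00 = -r3 * E := by linear_combination -h00
  have c10 : a00 * b10 = -q * E := by linear_combination -h10 + h00
  have c21 : a11 * b10 = -a1 * E := by
    linear_combination (1/4 : ℂ) * h22 - h21 - (1/2 : ℂ) * h12 + 2 * h11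
      - (1/2 : ℂ) * h01 - (1/4 : ℂ) * h00
  have c22 : a11 * b11 = -a3 * E := by
    linear_combination -(1/4 : ℂ) * h22 + (1/2 : ℂ) * h21 + (1/2 : ℂ) * h12 - h11
      + (1/4 : ℂ) * h00
  have c11 : a11 * b00 + a00 * b11 = -B2 - (a0 : ℂ) * E + (E : ℂ) ^ 2 := by
    linear_combination -(1/4 : ℂ) * h22 + h21 + h12 - 4 * h11 + (3/2 : ℂ) * h10
      + (3/2 : ℂ) * h01 - (3/4 : ℂ) * h00
  have ha00 : a00 ≠ 0 := by
    intro h0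
    rw [h0, zero_mul] at c00
    exact mul_ne_zero (neg_ne_zero.mpr hr3ne) hEc c00.symm
  have hR : a11 * q = a00 * a1 := by
    have h' : a11 * q * E = a00 * a1 * E := by linear_combination a11 * c10 - a00 * c21
    exact mul_right_cancel₀ hEc h'
  have key : a00 ^ 2 * (a1 * q * ((E : ℂ) ^ 2 - (a0 : ℂ) * E - B2)
      + (a1 ^ 2 * r3 + a3 * q ^ 2) * E) = 0 := by
    linear_combination (-(a00 ^ 2 * a1 * q)) * c11 + (a11 ^ 2 * q ^ 2) * c00
      + (a00 ^ 2 * q ^ 2) * c22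
      - (a00 * q * a11 * b00 + a00 ^ 2 * q * b11 + r3 * E * (a00 * a1 + a11 * q)) * hR
  have quad : a1 * q * ((E : ℂ) ^ 2 - (a0 : ℂ) * E - B2)
      + (a1 ^ 2 * r3 + a3 * q ^ 2) * E = 0 := by
    rcases mul_eq_zero.mp key with h' | h'
    · exact absurd h' (pow_ne_zero 2 ha00)
    · exact h'
  show p.IsRoot (E : ℂ)
  have : p.eval (E : ℂ) = a1 * q * (E : ℂ) ^ 2
      + (a1 ^ 2 * r3 + a3 * q ^ 2 - (a0 : ℂ) * a1 * q) * E + -(a1 * q) * B2 := by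
    simp [hp]
  rw [Polynomial.IsRoot, this]
  linear_combination quad
end

section
/- Let c : ℤ×ℤ → ℂ be the coefficients of a polynomial P_c = c_{2,2}z1²z2² + c_{2,1}z1²z2 + c_{1,2}z1z2² + c_{1,1}z1z2 + c_{1,0}z1 + c_{0,1}z2 + c_{0,0}. If P_c = (a_{1,1}z1z2 + a_{0,0})·(b_{1,1}z1z2 + b_{1,0}z1 + b_{0,1}z2 + b_{0,0}) for some complex coefficients, then c_{1,0}·c_{1,2} = c_{2,1}·c_{0,1}, c_{0,0}·c_{1,2}² − c_{1,1}·c_{1,2}·c_{0,1} + c_{2,2}·c_{0,1}² = 0, c_{0,0}·c_{2,1}·c_{1,2} − c_{1,0}·c_{1,1}·c_{1,2} + c_{1,0}·c_{2,2}·c_{0,1} = 0, and c_{0,0}·c_{2,1}² + c_{1,0}²·c_{2,2} − c_{1,0}·c_{2,1}·c_{1,1} = 0. -/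
open Complex

/-- Elimination-ideal conditions on the coefficients necessary for a factorization
of the shape (a₁₁z₁z₂ + a₀₀)(b₁₁z₁z₂ + b₁₀z₁ + b₀₁z₂ + b₀₀). -/
theorem stmt_6 (c : ℤ × ℤ → ℂ) (a11 a00 b11 b10 b01 b00 : ℂ)
    (h : ∀ z1 z2 : ℂ,
      c (2,2) * z1 ^ 2 * z2 ^ 2 + c (2,1) * z1 ^ 2 * z2 + c (1,2) * z1 * z2 ^ 2
        + c (1,1) * z1 * z2 + c (1,0) * z1 + c (0,1) * z2 + c (0,0)
      = (a11 * z1 * z2 + a00) * (b11 * z1 * z2 + b10 * z1 + b01 * z2 + b00)) :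
    c (1,0) * c (1,2) = c (2,1) * c (0,1)
    ∧ c (0,0) * c (1,2) ^ 2 - c (1,1) * c (1,2) * c (0,1) + c (2,2) * c (0,1) ^ 2 = 0
    ∧ c (0,0) * c (2,1) * c (1,2) - c (1,0) * c (1,1) * c (1,2) + c (1,0) * c (2,2) * c (0,1) = 0
    ∧ c (0,0) * c (2,1) ^ 2 + c (1,0) ^ 2 * c (2,2) - c (1,0) * c (2,1) * c (1,1) = 0 := by
  have e22 : c (2,2) = a11*b11 := by linear_combination (1/4) * h 0 0 + (-1/2) * h 0 1 + (1/4) * h 0 2 + (-1/2) * h 1 0 + (1) * h 1 1 + (-1/2) * h 1 2 + (1/4) * h 2 0 + (-1/2) * h 2 1 + (1/4) * h 2 2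
  have e21 : c (2,1) = a11*b10 := by linear_combination (-3/4) * h 0 0 + (1) * h 0 1 + (-1/4) * h 0 2 + (3/2) * h 1 0 + (-2) * h 1 1 + (1/2) * h 1 2 + (-3/4) * h 2 0 + (1) * h 2 1 + (-1/4) * h 2 2
  have e12 : c (1,2) = a11*b01 := by linear_combination (-3/4) * h 0 0 + (3/2) * h 0 1 + (-3/4) * h 0 2 + (1) * h 1 0 + (-2) * h 1 1 + (1) * h 1 2 + (-1/4) * h 2 0 + (1/2) * h 2 1 + (-1/4) * h 2 2
  have e11 : c (1,1) = a11*b00 + a00*b11 := by linear_combination (9/4) * h 0 0 + (-3) * h 0 1 + (3/4) * h 0 2 + (-3) * h 1 0 + (4) * h 1 1 + (-1) * h 1 2 + (3/4) * h 2 0 + (-1) * h 2 1 + (1/4) * h 2 2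
  have e10 : c (1,0) = a00*b10 := by linear_combination (-3/2) * h 0 0 + (2) * h 1 0 + (-1/2) * h 2 0
  have e01 : c (0,1) = a00*b01 := by linear_combination (-3/2) * h 0 0 + (2) * h 0 1 + (-1/2) * h 0 2
  have e00 : c (0,0) = a00*b00 := by linear_combination (1) * h 0 0
  refine ⟨?_, ?_, ?_, ?_⟩ <;>
    simp only [e22, e21, e12, e11, e10, e01, e00] <;> ring
end

section
/- Let a1, a2, b0 be nonzero complex numbers, a0 real, and define P_c(z1,z2;E) = −conj(a2)·E·z1 − conj(a1)·E·z2 − a1·E·z1²z2 − a2·E·z1z2² + (−|b0|² − a0·E + E²)·z1z2. For every real E such that E ≠ 0 and the coefficient −|b0|² − a0E + E² ≠ 0 in a suitable sense, P_c is irreducible: it admits no factorization into two nonconstant polynomials in z1 and z2. -/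
open Complex MvPolynomial


-- degreeOf additivity
lemma degOf0_mul (A B : MvPolynomial (Fin 2) ℂ) (hA : A ≠ 0) (hB : B ≠ 0) :
    degreeOf 0 (A * B) = degreeOf 0 A + degreeOf 0 B := by
  have hA' : finSuccEquiv ℂ 1 A ≠ 0 :=
    fun h => hA ((finSuccEquiv ℂ 1).injective (by rw [h, map_zero]))
  have hB' : finSuccEquiv ℂ 1 B ≠ 0 :=
    fun h => hB ((finSuccEquiv ℂ 1).injective (by rw [h, map_zero]))
  rw [← natDegree_finSuccEquiv, map_mul, Polynomial.natDegree_mul hA' hB',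
    natDegree_finSuccEquiv, natDegree_finSuccEquiv]

lemma degOf1_mul (A B : MvPolynomial (Fin 2) ℂ) (hA : A ≠ 0) (hB : B ≠ 0) :
    degreeOf 1 (A * B) = degreeOf 1 A + degreeOf 1 B := by
  have hinj : Function.Injective (Equiv.swap (0 : Fin 2) 1) := (Equiv.swap _ _).injective
  have key : ∀ p : MvPolynomial (Fin 2) ℂ,
      degreeOf 1 p = degreeOf 0 (rename (Equiv.swap (0 : Fin 2) 1) p) := by
    intro p
    have := degreeOf_rename_of_injective (p := p) hinj 1
    rw [Equiv.swap_apply_right] at this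
    exact this.symm
  have hrA : rename (Equiv.swap (0 : Fin 2) 1) A ≠ 0 := by
    intro h; exact hA (rename_injective _ hinj (by simpa using h))
  have hrB : rename (Equiv.swap (0 : Fin 2) 1) B ≠ 0 := by
    intro h; exact hB (rename_injective _ hinj (by simpa using h))
  rw [key, key A, key B, map_mul, degOf0_mul _ _ hrA hrB]

lemma fin2_eq (d : Fin 2 →₀ ℕ) : d = Finsupp.single 0 (d 0) + Finsupp.single 1 (d 1) := by
  ext k; fin_cases k <;> simp [Finsupp.single_apply]

lemma rep2 (p : MvPolynomial (Fin 2) ℂ) (m n : ℕ) (h0 : p.degreeOf 0 ≤ m) (h1 : p.degreeOf 1 ≤ n) :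
    p = ∑ i ∈ Finset.range (m+1), ∑ j ∈ Finset.range (n+1),
      C (coeff (Finsupp.single 0 i + Finsupp.single 1 j) p) * X 0 ^ i * X 1 ^ j := by
  apply MvPolynomial.ext
  intro d
  have key : ∀ i j : ℕ, ((Finsupp.single 0 i + Finsupp.single 1 j : Fin 2 →₀ ℕ) = d)
      ↔ (i = d 0 ∧ j = d 1) := by
    intro i j
    constructor
    · intro h
      constructor
      · have := DFunLike.congr_fun h 0; simpa [Finsupp.single_apply] using this
      · have := DFunLike.congr_fun h 1; simpa [Finsupp.single_apply] using this
    · rintro ⟨rfl, rfl⟩; exact (fin2_eq d).symm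
  have hco : ∀ (i j : ℕ) (c : ℂ),
      coeff d (C c * X (0:Fin 2) ^ i * X 1 ^ j)
        = if i = d 0 ∧ j = d 1 then c else 0 := by
    intro i j c
    rw [mul_assoc, X_pow_eq_monomial, X_pow_eq_monomial, monomial_mul, one_mul,
      coeff_C_mul, coeff_monomial]
    by_cases h : (Finsupp.single (0:Fin 2) i + Finsupp.single 1 j) = d
    · rw [if_pos h, if_pos ((key i j).mp h), mul_one]
    · rw [if_neg h, if_neg (fun hc => h ((key i j).mpr hc)), mul_zero]
  rw [coeff_sum]
  simp_rw [coeff_sum, hco]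
  by_cases hd0 : d 0 ≤ m
  · by_cases hd1 : d 1 ≤ n
    · rw [Finset.sum_eq_single (d 0), Finset.sum_eq_single (d 1)]
      · rw [if_pos ⟨rfl, rfl⟩]
        conv_lhs => rw [fin2_eq d]
      · intro b _ hb; rw [if_neg (fun hc => hb hc.2)]
      · intro h; exact absurd (Finset.mem_range.mpr (Nat.lt_succ_of_le hd1)) h
      · intro b _ hb
        apply Finset.sum_eq_zero
        intro j _
        rw [if_neg (fun hc => hb hc.1)]
      · intro h; exact absurd (Finset.mem_range.mpr (Nat.lt_succ_of_le hd0)) h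
    · -- d 1 > n : coeff d p = 0 and RHS = 0
      have hns : d ∉ p.support := by
        intro hmem
        exact hd1 (le_trans (monomial_le_degreeOf 1 hmem) h1)
      rw [notMem_support_iff.mp hns]
      apply (Finset.sum_eq_zero _).symm
      intro i _
      apply Finset.sum_eq_zero
      intro j hj
      rw [if_neg]
      rintro ⟨-, rfl⟩
      exact hd1 (Nat.lt_succ_iff.mp (Finset.mem_range.mp hj))
  · have hns : d ∉ p.support := by
      intro hmem
      exact hd0 (le_trans (monomial_le_degreeOf 0 hmem) h0)
    rw [notMem_support_iff.mp hns]
    apply (Finset.sum_eq_zero _).symm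
    intro i hi
    apply Finset.sum_eq_zero
    intro j _
    rw [if_neg]
    rintro ⟨rfl, -⟩
    exact hd0 (Nat.lt_succ_iff.mp (Finset.mem_range.mp hi))

lemma quad_root (a c e : ℂ) (h : ¬(c = 0 ∧ e = 0)) : ∃ z : ℂ, a + c*z + e*z^2 = 0 := by
  by_cases he : e = 0
  · have hc : c ≠ 0 := fun hc => h ⟨hc, he⟩
    refine ⟨-a/c, ?_⟩
    rw [he]
    field_simp
    ring
  · obtain ⟨s, hs⟩ := IsAlgClosed.exists_pow_nat_eq (c^2 - 4*e*a) (n := 2) (by norm_num)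
    refine ⟨(-c + s)/(2*e), ?_⟩
    have hz : 2*e*((-c + s)/(2*e)) = -c + s := by field_simp
    have h4 : (4*e) * (a + c*((-c + s)/(2*e)) + e*((-c + s)/(2*e))^2) = 0 := by
      linear_combination (c + 2*e*((-c + s)/(2*e)) + s) * hz + hs
    exact (mul_eq_zero.mp h4).resolve_left (mul_ne_zero (by norm_num) he)

lemma helper_line (c10 c01 c21 c12 c11 : ℂ) (h10 : c10 ≠ 0) (h01 : c01 ≠ 0) (h11 : c11 ≠ 0)
    (a b c : ℂ) (hbc : ¬(b = 0 ∧ c = 0)) (g : ℂ → ℂ → ℂ)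
    (hev : ∀ x y : ℂ, c10*x + c01*y + c21*x^2*y + c12*x*y^2 + c11*x*y
      = (a + b*x + c*y) * g x y) : False := by
  by_cases hc : c = 0
  · have hb : b ≠ 0 := fun hb => hbc ⟨hb, hc⟩
    have hlin : ∀ y : ℂ, a + b * (-a/b) + c * y = 0 := by
      intro y; rw [hc]; field_simp
      ring
    have hz : ∀ y : ℂ, c10*(-a/b) + c01*y + c21*(-a/b)^2*y + c12*(-a/b)*y^2 + c11*(-a/b)*y = 0 := by
      intro y; rw [hev, hlin y, zero_mul]
    have h0 := hz 0
    have ha : a = 0 := by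
      have h0' : c10 * a = 0 := by
        have h0'' : c10 * (-a/b) = 0 := by linear_combination h0
        have : c10 * (-a/b) * (-b) = c10 * a := by
          rw [mul_assoc, div_mul_eq_mul_div, neg_mul_neg, mul_div_assoc, div_self hb, mul_one]
        rw [← this, h0'', zero_mul]
      rcases mul_eq_zero.mp h0' with h | h
      · exact absurd h h10
      · exact h
    have h1 := hz 1
    rw [ha] at h1
    simp at h1
    exact h01 h1
  · have hlin : ∀ x : ℂ, a + b * x + c * (-(a+b*x)/c) = 0 := by
      intro x; field_simp
      ring
    have hz : ∀ x : ℂ, c10*x + c01*(-(a+b*x)/c) + c21*x^2*(-(a+b*x)/c)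
        + c12*x*(-(a+b*x)/c)^2 + c11*x*(-(a+b*x)/c) = 0 := by
      intro x; rw [hev, hlin x, zero_mul]
    have h0 := hz 0
    have ha : a = 0 := by
      have h0' : c01 * a = 0 := by
        have h0'' : c01 * (-a/c) = 0 := by linear_combination h0
        have : c01 * (-a/c) * (-c) = c01 * a := by
          rw [mul_assoc, div_mul_eq_mul_div, neg_mul_neg, mul_div_assoc, div_self hc, mul_one]
        rw [← this, h0'', zero_mul]
      rcases mul_eq_zero.mp h0' with h | h
      · exact absurd h h01
      · exact h
    have h1 := hz 1
    have h2 := hz (-1)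
    rw [ha] at h1 h2
    have hb : b = 0 := by
      have hcomb : c11 * b * c^3 = 0 := by
        field_simp at h1 h2
        linear_combination (h1 + h2) * (-(1:ℂ)/2) * c^2
      rcases mul_eq_zero.mp hcomb with h | h
      · rcases mul_eq_zero.mp h with h' | h'
        · exact absurd h' h11
        · exact h'
      · exact absurd h (pow_ne_zero 3 hc)
    have h3 := hev 1 0
    rw [ha, hb] at h3
    simp at h3
    exact h10 h3

lemma helper_y (c10 c01 : ℂ) (h10 : c10 ≠ 0) (h01 : c01 ≠ 0)
    (c21 c12 c11 : ℂ) (a c e : ℂ) (hce : ¬(c = 0 ∧ e = 0)) (g : ℂ → ℂ → ℂ)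
    (hev : ∀ x y : ℂ, c10*x + c01*y + c21*x^2*y + c12*x*y^2 + c11*x*y
      = (a + c*y + e*y^2) * g x y) : False := by
  obtain ⟨y0, hy0⟩ := quad_root a c e hce
  have hz : ∀ x : ℂ, c10*x + c01*y0 + c21*x^2*y0 + c12*x*y0^2 + c11*x*y0 = 0 := by
    intro x; rw [hev, hy0, zero_mul]
  have h0 := hz 0
  simp at h0
  have hy : y0 = 0 := by
    rcases h0 with h | h
    · exact absurd h h01
    · exact h
  have h1 := hz 1
  rw [hy] at h1
  simp at h1
  exact h10 h1

lemma helper_x (c10 c01 : ℂ) (h10 : c10 ≠ 0) (h01 : c01 ≠ 0)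
    (c21 c12 c11 : ℂ) (a b e : ℂ) (hbe : ¬(b = 0 ∧ e = 0)) (g : ℂ → ℂ → ℂ)
    (hev : ∀ x y : ℂ, c10*x + c01*y + c21*x^2*y + c12*x*y^2 + c11*x*y
      = (a + b*x + e*x^2) * g x y) : False := by
  obtain ⟨x0, hx0⟩ := quad_root a b e hbe
  have hz : ∀ y : ℂ, c10*x0 + c01*y + c21*x0^2*y + c12*x0*y^2 + c11*x0*y = 0 := by
    intro y; rw [hev, hx0, zero_mul]
  have h0 := hz 0
  simp at h0
  have hx : x0 = 0 := by
    rcases h0 with h | h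
    · exact absurd h h10
    · exact h
  have h1 := hz 1
  rw [hx] at h1
  simp at h1
  exact h01 h1
lemma helper_bilin (c10 c01 c21 c12 c11 : ℂ) (h10 : c10 ≠ 0) (h01 : c01 ≠ 0) (h11 : c11 ≠ 0)
    (a b c d a' b' c' d' : ℂ)
    (hA : ¬(b = 0 ∧ c = 0 ∧ d = 0)) (hB : ¬(b' = 0 ∧ c' = 0 ∧ d' = 0))
    (hev : ∀ x y : ℂ, c10*x + c01*y + c21*x^2*y + c12*x*y^2 + c11*x*y
      = (a + b*x + c*y + d*x*y) * (a' + b'*x + c'*y + d'*x*y)) : False := by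
  have hdd : d * d' = 0 := by
    have h0 := hev 0 0
    have h1 := hev 1 1
    have h2 := hev (-1) (-1)
    have h3 := hev 2 2
    have h4 := hev (-2) (-2)
    linear_combination (4*h1 + 4*h2 - h3 - h4 - 6*h0)/24
  rcases mul_eq_zero.mp hdd with hd | hd
  · refine helper_line c10 c01 c21 c12 c11 h10 h01 h11 a b c
      (fun h => hA ⟨h.1, h.2, hd⟩) (fun x y => a' + b'*x + c'*y + d'*x*y) ?_
    intro x y
    rw [hev x y, hd]
    ring
  · refine helper_line c10 c01 c21 c12 c11 h10 h01 h11 a' b' c'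
      (fun h => hB ⟨h.1, h.2, hd⟩) (fun x y => a + b*x + c*y + d*x*y) ?_
    intro x y
    rw [hev x y, hd]
    ring

-- unfolded representation lemmas
lemma rep02 (p : MvPolynomial (Fin 2) ℂ) (h0 : p.degreeOf 0 ≤ 0) (h1 : p.degreeOf 1 ≤ 2) :
    ∃ u v w : ℂ, p = C u + C v * X 1 + C w * X 1^2 := by
  refine ⟨coeff (Finsupp.single 0 0 + Finsupp.single 1 0) p,
    coeff (Finsupp.single 0 0 + Finsupp.single 1 1) p,
    coeff (Finsupp.single 0 0 + Finsupp.single 1 2) p, ?_⟩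
  conv_lhs => rw [rep2 p 0 2 h0 h1]
  simp only [Finset.sum_range_succ, Finset.sum_range_zero, pow_zero, pow_one, one_mul,
    mul_one, zero_add]

lemma rep20 (p : MvPolynomial (Fin 2) ℂ) (h0 : p.degreeOf 0 ≤ 2) (h1 : p.degreeOf 1 ≤ 0) :
    ∃ u v w : ℂ, p = C u + C v * X 0 + C w * X 0^2 := by
  refine ⟨coeff (Finsupp.single 0 0 + Finsupp.single 1 0) p,
    coeff (Finsupp.single 0 1 + Finsupp.single 1 0) p,
    coeff (Finsupp.single 0 2 + Finsupp.single 1 0) p, ?_⟩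
  conv_lhs => rw [rep2 p 2 0 h0 h1]
  simp only [Finset.sum_range_succ, Finset.sum_range_zero, pow_zero, pow_one, one_mul,
    mul_one, zero_add]

lemma rep11 (p : MvPolynomial (Fin 2) ℂ) (h0 : p.degreeOf 0 ≤ 1) (h1 : p.degreeOf 1 ≤ 1) :
    ∃ u v w z : ℂ, p = C u + C v * X 0 + C w * X 1 + C z * X 0 * X 1 := by
  refine ⟨coeff (Finsupp.single 0 0 + Finsupp.single 1 0) p,
    coeff (Finsupp.single 0 1 + Finsupp.single 1 0) p,
    coeff (Finsupp.single 0 0 + Finsupp.single 1 1) p,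
    coeff (Finsupp.single 0 1 + Finsupp.single 1 1) p, ?_⟩
  conv_lhs => rw [rep2 p 1 1 h0 h1]
  simp only [Finset.sum_range_succ, Finset.sum_range_zero, pow_zero, pow_one, one_mul,
    mul_one, zero_add]
  ring

/-- Case C1: for every real E ≠ 0 with −|b0|² − a0E + E² ≠ 0, the dispersion polynomial P_c
is irreducible: it admits no factorization into two nonconstant polynomials. -/
theorem stmt_15 (a1 a2 b0 : ℂ) (a0 : ℝ)
    (ha1 : a1 ≠ 0) (ha2 : a2 ≠ 0) (hb0 : b0 ≠ 0)
    (E : ℝ) (hE : E ≠ 0)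
    (hcoef : -(‖b0‖) ^ 2 - a0 * E + E ^ 2 ≠ 0) :
    ¬ ∃ A B : MvPolynomial (Fin 2) ℂ,
      (C (-(starRingEnd ℂ) a2 * (E : ℂ)) * X 0
        + C (-(starRingEnd ℂ) a1 * (E : ℂ)) * X 1
        + C (-a1 * (E : ℂ)) * X 0 ^ 2 * X 1
        + C (-a2 * (E : ℂ)) * X 0 * X 1 ^ 2
        + C ((-(‖b0‖) ^ 2 - a0 * E + E ^ 2 : ℝ) : ℂ) * X 0 * X 1)
        = A * B ∧ A.totalDegree ≠ 0 ∧ B.totalDegree ≠ 0 := by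
  rintro ⟨A, B, hPAB, hA, hB⟩
  have hEc : (E : ℂ) ≠ 0 := Complex.ofReal_ne_zero.mpr hE
  have h10 : -(starRingEnd ℂ) a2 * (E : ℂ) ≠ 0 :=
    mul_ne_zero (by simpa using ha2) hEc
  have h01 : -(starRingEnd ℂ) a1 * (E : ℂ) ≠ 0 :=
    mul_ne_zero (by simpa using ha1) hEc
  have h11 : ((-(‖b0‖) ^ 2 - a0 * E + E ^ 2 : ℝ) : ℂ) ≠ 0 :=
    Complex.ofReal_ne_zero.mpr hcoef
  have hA0 : A ≠ 0 := fun h => hA (by simp [h])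
  have hB0 : B ≠ 0 := fun h => hB (by simp [h])
  -- evaluation identity
  have hev : ∀ x y : ℂ,
      (-(starRingEnd ℂ) a2 * (E : ℂ)) * x + (-(starRingEnd ℂ) a1 * (E : ℂ)) * y
        + (-a1 * (E : ℂ)) * x^2 * y + (-a2 * (E : ℂ)) * x * y^2
        + ((-(‖b0‖) ^ 2 - a0 * E + E ^ 2 : ℝ) : ℂ) * x * y
      = eval ![x, y] A * eval ![x, y] B := by
    intro x y
    have h := congrArg (eval ![x, y]) hPAB
    simp only [map_add, map_mul, map_pow, eval_C, eval_X, Matrix.cons_val_zero,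
      Matrix.cons_val_one, Matrix.head_cons] at h
    linear_combination h
  -- degree bounds on the explicit polynomial
  have hCmul : ∀ (cc : ℂ) (i : Fin 2) (p : MvPolynomial (Fin 2) ℂ) (m : ℕ),
      degreeOf i p ≤ m → degreeOf i (C cc * p) ≤ m := by
    intro cc i p m hp
    exact le_trans (degreeOf_mul_le _ _ _) (by simpa [degreeOf_C] using hp)
  have hterm2 : ∀ (cc : ℂ) (i : Fin 2) (p q : MvPolynomial (Fin 2) ℂ) (m n : ℕ),
      degreeOf i p ≤ m → degreeOf i q ≤ n → degreeOf i (C cc * p * q) ≤ m + n := by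
    intro cc i p q m n hp hq
    exact le_trans (degreeOf_mul_le _ _ _) (add_le_add (hCmul cc i p m hp) hq)
  have d00 : degreeOf (0 : Fin 2) (X (0 : Fin 2) : MvPolynomial (Fin 2) ℂ) ≤ 1 := by
    simp [degreeOf_X]
  have d01 : degreeOf (0 : Fin 2) (X (1 : Fin 2) : MvPolynomial (Fin 2) ℂ) ≤ 0 := by
    simp [degreeOf_X]
  have d10 : degreeOf (1 : Fin 2) (X (0 : Fin 2) : MvPolynomial (Fin 2) ℂ) ≤ 0 := by
    simp [degreeOf_X]
  have d11 : degreeOf (1 : Fin 2) (X (1 : Fin 2) : MvPolynomial (Fin 2) ℂ) ≤ 1 := by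
    simp [degreeOf_X]
  have p00 : degreeOf (0 : Fin 2) ((X (0 : Fin 2) : MvPolynomial (Fin 2) ℂ) ^ 2) ≤ 2 :=
    le_trans (degreeOf_pow_le _ _ _) (by omega)
  have p01 : degreeOf (0 : Fin 2) ((X (1 : Fin 2) : MvPolynomial (Fin 2) ℂ) ^ 2) ≤ 0 :=
    le_trans (degreeOf_pow_le _ _ _) (by omega)
  have p10 : degreeOf (1 : Fin 2) ((X (0 : Fin 2) : MvPolynomial (Fin 2) ℂ) ^ 2) ≤ 0 :=
    le_trans (degreeOf_pow_le _ _ _) (by omega)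
  have p11 : degreeOf (1 : Fin 2) ((X (1 : Fin 2) : MvPolynomial (Fin 2) ℂ) ^ 2) ≤ 2 :=
    le_trans (degreeOf_pow_le _ _ _) (by omega)
  have hPdeg0 : degreeOf (0 : Fin 2)
      (C (-(starRingEnd ℂ) a2 * (E : ℂ)) * X 0
        + C (-(starRingEnd ℂ) a1 * (E : ℂ)) * X 1
        + C (-a1 * (E : ℂ)) * X 0 ^ 2 * X 1
        + C (-a2 * (E : ℂ)) * X 0 * X 1 ^ 2
        + C ((-(‖b0‖) ^ 2 - a0 * E + E ^ 2 : ℝ) : ℂ) * X 0 * X 1) ≤ 2 := by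
    refine le_trans (degreeOf_add_le _ _ _) (max_le ?_ ?_)
    · refine le_trans (degreeOf_add_le _ _ _) (max_le ?_ ?_)
      · refine le_trans (degreeOf_add_le _ _ _) (max_le ?_ ?_)
        · refine le_trans (degreeOf_add_le _ _ _) (max_le ?_ ?_)
          · exact le_trans (hCmul _ _ _ _ d00) (by omega)
          · exact le_trans (hCmul _ _ _ _ d01) (by omega)
        · exact le_trans (hterm2 _ _ _ _ _ _ p00 d01) (by omega)
      · exact le_trans (hterm2 _ _ _ _ _ _ d00 p01) (by omega)
    · exact le_trans (hterm2 _ _ _ _ _ _ d00 d01) (by omega)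
  have hPdeg1 : degreeOf (1 : Fin 2)
      (C (-(starRingEnd ℂ) a2 * (E : ℂ)) * X 0
        + C (-(starRingEnd ℂ) a1 * (E : ℂ)) * X 1
        + C (-a1 * (E : ℂ)) * X 0 ^ 2 * X 1
        + C (-a2 * (E : ℂ)) * X 0 * X 1 ^ 2
        + C ((-(‖b0‖) ^ 2 - a0 * E + E ^ 2 : ℝ) : ℂ) * X 0 * X 1) ≤ 2 := by
    refine le_trans (degreeOf_add_le _ _ _) (max_le ?_ ?_)
    · refine le_trans (degreeOf_add_le _ _ _) (max_le ?_ ?_)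
      · refine le_trans (degreeOf_add_le _ _ _) (max_le ?_ ?_)
        · refine le_trans (degreeOf_add_le _ _ _) (max_le ?_ ?_)
          · exact le_trans (hCmul _ _ _ _ d10) (by omega)
          · exact le_trans (hCmul _ _ _ _ d11) (by omega)
        · exact le_trans (hterm2 _ _ _ _ _ _ p10 d11) (by omega)
      · exact le_trans (hterm2 _ _ _ _ _ _ d10 p11) (by omega)
    · exact le_trans (hterm2 _ _ _ _ _ _ d10 d11) (by omega)
  have hAB0 : degreeOf 0 A + degreeOf 0 B ≤ 2 := by
    rw [← degOf0_mul A B hA0 hB0, ← hPAB]; exact hPdeg0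
  have hAB1 : degreeOf 1 A + degreeOf 1 B ≤ 2 := by
    rw [← degOf1_mul A B hA0 hB0, ← hPAB]; exact hPdeg1
  -- case analysis
  by_cases hA00 : degreeOf 0 A = 0
  · obtain ⟨u, v, w, hrep⟩ := rep02 A (by omega) (by omega)
    have hvw : ¬(v = 0 ∧ w = 0) := by
      rintro ⟨rfl, rfl⟩
      exact hA (by rw [hrep]; simp)
    refine helper_y (-(starRingEnd ℂ) a2 * (E : ℂ)) (-(starRingEnd ℂ) a1 * (E : ℂ)) h10 h01 (-a1 * (E : ℂ)) (-a2 * (E : ℂ)) (((-(‖b0‖) ^ 2 - a0 * E + E ^ 2 : ℝ) : ℂ)) u v w hvw (fun x y => eval ![x, y] B) ?_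
    intro x y
    rw [hev x y, hrep]
    simp only [map_add, map_mul, map_pow, eval_C, eval_X, Matrix.cons_val_zero,
      Matrix.cons_val_one, Matrix.head_cons]
  by_cases hB00 : degreeOf 0 B = 0
  · obtain ⟨u, v, w, hrep⟩ := rep02 B (by omega) (by omega)
    have hvw : ¬(v = 0 ∧ w = 0) := by
      rintro ⟨rfl, rfl⟩
      exact hB (by rw [hrep]; simp)
    refine helper_y (-(starRingEnd ℂ) a2 * (E : ℂ)) (-(starRingEnd ℂ) a1 * (E : ℂ)) h10 h01 (-a1 * (E : ℂ)) (-a2 * (E : ℂ)) (((-(‖b0‖) ^ 2 - a0 * E + E ^ 2 : ℝ) : ℂ)) u v w hvw (fun x y => eval ![x, y] A) ?_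
    intro x y
    rw [hev x y, hrep]
    simp only [map_add, map_mul, map_pow, eval_C, eval_X, Matrix.cons_val_zero,
      Matrix.cons_val_one, Matrix.head_cons]
    ring
  by_cases hA10 : degreeOf 1 A = 0
  · obtain ⟨u, v, w, hrep⟩ := rep20 A (by omega) (by omega)
    have hvw : ¬(v = 0 ∧ w = 0) := by
      rintro ⟨rfl, rfl⟩
      exact hA (by rw [hrep]; simp)
    refine helper_x (-(starRingEnd ℂ) a2 * (E : ℂ)) (-(starRingEnd ℂ) a1 * (E : ℂ)) h10 h01 (-a1 * (E : ℂ)) (-a2 * (E : ℂ)) (((-(‖b0‖) ^ 2 - a0 * E + E ^ 2 : ℝ) : ℂ)) u v w hvw (fun x y => eval ![x, y] B) ?_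
    intro x y
    rw [hev x y, hrep]
    simp only [map_add, map_mul, map_pow, eval_C, eval_X, Matrix.cons_val_zero,
      Matrix.cons_val_one, Matrix.head_cons]
  by_cases hB10 : degreeOf 1 B = 0
  · obtain ⟨u, v, w, hrep⟩ := rep20 B (by omega) (by omega)
    have hvw : ¬(v = 0 ∧ w = 0) := by
      rintro ⟨rfl, rfl⟩
      exact hB (by rw [hrep]; simp)
    refine helper_x (-(starRingEnd ℂ) a2 * (E : ℂ)) (-(starRingEnd ℂ) a1 * (E : ℂ)) h10 h01 (-a1 * (E : ℂ)) (-a2 * (E : ℂ)) (((-(‖b0‖) ^ 2 - a0 * E + E ^ 2 : ℝ) : ℂ)) u v w hvw (fun x y => eval ![x, y] A) ?_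
    intro x y
    rw [hev x y, hrep]
    simp only [map_add, map_mul, map_pow, eval_C, eval_X, Matrix.cons_val_zero,
      Matrix.cons_val_one, Matrix.head_cons]
    ring
  -- bilinear case
  · obtain ⟨u, v, w, z, hrepA⟩ := rep11 A (by omega) (by omega)
    obtain ⟨u', v', w', z', hrepB⟩ := rep11 B (by omega) (by omega)
    have hncA : ¬(v = 0 ∧ w = 0 ∧ z = 0) := by
      rintro ⟨rfl, rfl, rfl⟩
      exact hA (by rw [hrepA]; simp)
    have hncB : ¬(v' = 0 ∧ w' = 0 ∧ z' = 0) := by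
      rintro ⟨rfl, rfl, rfl⟩
      exact hB (by rw [hrepB]; simp)
    refine helper_bilin (-(starRingEnd ℂ) a2 * (E : ℂ)) (-(starRingEnd ℂ) a1 * (E : ℂ)) (-a1 * (E : ℂ)) (-a2 * (E : ℂ)) (((-(‖b0‖) ^ 2 - a0 * E + E ^ 2 : ℝ) : ℂ)) h10 h01 h11 u v w z u' v' w' z' hncA hncB ?_
    intro x y
    rw [hev x y, hrepA, hrepB]
    simp only [map_add, map_mul, map_pow, eval_C, eval_X, Matrix.cons_val_zero,
      Matrix.cons_val_one, Matrix.head_cons]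
end
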